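/- (Theorem 1, gyrotranslation part.) For every c > 0 and all u, x, y ∈ E with c·‖u‖² < 1, c·‖x‖² < 1, c·‖y‖² < 1, the left gyrotranslation L_u(z) = u ⊕_c z is an isometry of the Poincaré ball with respect to the hyperbolic distance: d_c(u ⊕_c x, u ⊕_c y) = d_c(x, y). -/

import Mathlib

open scoped RealInnerProductSpace

variable {E : Type*} [NormedAddCommGroup E] [InnerProductSpace ℝ E] [FiniteDimensional ℝ E]

/-- Möbius addition on the Poincaré ball of curvature `-c`. -/
noncomputable def mobiusAdd (c : ℝ) (x y : E) : E :=
  (1 / (1 + 2 * c * ⟪x, y⟫ + c ^ 2 * ‖x‖ ^ 2 * ‖y‖ ^ 2)) •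
    ((1 + 2 * c * ⟪x, y⟫ + c * ‖y‖ ^ 2) • x + (1 - c * ‖x‖ ^ 2) • y)

/-- Inverse hyperbolic tangent. -/
noncomputable def artanh (t : ℝ) : ℝ := (1 / 2) * Real.log ((1 + t) / (1 - t))

/-- Hyperbolic distance on the Poincaré ball of curvature `-c`. -/
noncomputable def hypDist (c : ℝ) (x y : E) : ℝ :=
  (2 / Real.sqrt c) * artanh (Real.sqrt c * ‖mobiusAdd c (-x) y‖)

lemma denom_pos (c : ℝ) (hc : 0 < c) (x y : E)
    (hx : c * ‖x‖ ^ 2 < 1) (hy : c * ‖y‖ ^ 2 < 1) :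
    0 < 1 + 2 * c * ⟪x, y⟫ + c ^ 2 * ‖x‖ ^ 2 * ‖y‖ ^ 2 := by
  have h1 : |⟪x, y⟫| ≤ ‖x‖ * ‖y‖ := abs_real_inner_le_norm x y
  have h3 : c * (‖x‖ * ‖y‖) < 1 := by
    nlinarith [mul_nonneg hc.le (sq_nonneg (‖x‖ - ‖y‖))]
  nlinarith [mul_pos (sub_pos.mpr h3) (sub_pos.mpr h3),
    mul_le_mul_of_nonneg_left (abs_le.mp h1).1 hc.le]

lemma norm_mobiusAdd_sq (c : ℝ) (x y : E)
    (hD : 1 + 2 * c * ⟪x, y⟫ + c ^ 2 * ‖x‖ ^ 2 * ‖y‖ ^ 2 ≠ 0) :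
    ‖mobiusAdd c x y‖ ^ 2 = (‖x‖ ^ 2 + 2 * ⟪x, y⟫ + ‖y‖ ^ 2) /
      (1 + 2 * c * ⟪x, y⟫ + c ^ 2 * ‖x‖ ^ 2 * ‖y‖ ^ 2) := by
  unfold mobiusAdd
  have hv : ‖(1 + 2 * c * ⟪x, y⟫ + c * ‖y‖ ^ 2) • x + (1 - c * ‖x‖ ^ 2) • y‖ ^ 2
      = (1 + 2 * c * ⟪x, y⟫ + c * ‖y‖ ^ 2) ^ 2 * ‖x‖ ^ 2
        + 2 * ((1 + 2 * c * ⟪x, y⟫ + c * ‖y‖ ^ 2) * (1 - c * ‖x‖ ^ 2)) * ⟪x, y⟫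
        + (1 - c * ‖x‖ ^ 2) ^ 2 * ‖y‖ ^ 2 := by
    rw [@norm_add_sq_real, norm_smul, norm_smul, real_inner_smul_left, real_inner_smul_right,
      Real.norm_eq_abs, Real.norm_eq_abs, mul_pow, mul_pow, sq_abs, sq_abs]
    ring
  rw [norm_smul, Real.norm_eq_abs, mul_pow, sq_abs, hv]
  field_simp
  ring

lemma mobius_mem (c : ℝ) (hc : 0 < c) (x y : E)
    (hx : c * ‖x‖ ^ 2 < 1) (hy : c * ‖y‖ ^ 2 < 1) :
    c * ‖mobiusAdd c x y‖ ^ 2 < 1 := by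
  have hD := denom_pos c hc x y hx hy
  rw [norm_mobiusAdd_sq c x y hD.ne', ← mul_div_assoc, div_lt_one hD]
  nlinarith [mul_pos (sub_pos.mpr hx) (sub_pos.mpr hy)]

lemma norm_mobiusAdd_neg_sq (c : ℝ) (x y : E)
    (hD : 1 - 2 * c * ⟪x, y⟫ + c ^ 2 * ‖x‖ ^ 2 * ‖y‖ ^ 2 ≠ 0) :
    ‖mobiusAdd c (-x) y‖ ^ 2 = (‖x‖ ^ 2 - 2 * ⟪x, y⟫ + ‖y‖ ^ 2) /
      (1 - 2 * c * ⟪x, y⟫ + c ^ 2 * ‖x‖ ^ 2 * ‖y‖ ^ 2) := by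
  have e1 : ⟪-x, y⟫ = -⟪x, y⟫ := inner_neg_left x y ..
  have hD' : (1 + 2 * c * ⟪-x, y⟫ + c ^ 2 * ‖-x‖ ^ 2 * ‖y‖ ^ 2)
      = (1 - 2 * c * ⟪x, y⟫ + c ^ 2 * ‖x‖ ^ 2 * ‖y‖ ^ 2) := by
    rw [e1, norm_neg]; ring
  rw [norm_mobiusAdd_sq c (-x) y (by rw [hD']; exact hD), hD', e1, norm_neg]
  ring_nf

lemma inner_mobiusAdd (c : ℝ) (u x y : E)
    (hDx : 1 + 2 * c * ⟪u, x⟫ + c ^ 2 * ‖u‖ ^ 2 * ‖x‖ ^ 2 ≠ 0)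
    (hDy : 1 + 2 * c * ⟪u, y⟫ + c ^ 2 * ‖u‖ ^ 2 * ‖y‖ ^ 2 ≠ 0) :
    ⟪mobiusAdd c u x, mobiusAdd c u y⟫ =
      ((1 + 2 * c * ⟪u, x⟫ + c * ‖x‖ ^ 2) * (1 + 2 * c * ⟪u, y⟫ + c * ‖y‖ ^ 2) * ‖u‖ ^ 2
        + (1 + 2 * c * ⟪u, x⟫ + c * ‖x‖ ^ 2) * (1 - c * ‖u‖ ^ 2) * ⟪u, y⟫
        + (1 - c * ‖u‖ ^ 2) * (1 + 2 * c * ⟪u, y⟫ + c * ‖y‖ ^ 2) * ⟪u, x⟫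
        + (1 - c * ‖u‖ ^ 2) ^ 2 * ⟪x, y⟫) /
      ((1 + 2 * c * ⟪u, x⟫ + c ^ 2 * ‖u‖ ^ 2 * ‖x‖ ^ 2) *
        (1 + 2 * c * ⟪u, y⟫ + c ^ 2 * ‖u‖ ^ 2 * ‖y‖ ^ 2)) := by
  unfold mobiusAdd
  simp only [real_inner_smul_left, real_inner_smul_right, inner_add_left, inner_add_right,
    real_inner_self_eq_norm_sq]
  rw [real_inner_comm x u]
  field_simp
  ring

theorem gyrotranslation_isometry (c : ℝ) (hc : 0 < c) (u x y : E)
    (hu : c * ‖u‖ ^ 2 < 1) (hx : c * ‖x‖ ^ 2 < 1) (hy : c * ‖y‖ ^ 2 < 1) :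
    hypDist c (mobiusAdd c u x) (mobiusAdd c u y) = hypDist c x y := by
  set P := mobiusAdd c u x with hPdef
  set Q := mobiusAdd c u y with hQdef
  have hDx := denom_pos c hc u x hu hx
  have hDy := denom_pos c hc u y hu hy
  have hP : c * ‖P‖ ^ 2 < 1 := mobius_mem c hc u x hu hx
  have hQ : c * ‖Q‖ ^ 2 < 1 := mobius_mem c hc u y hu hy
  have hE1 : 0 < 1 - 2 * c * ⟪P, Q⟫ + c ^ 2 * ‖P‖ ^ 2 * ‖Q‖ ^ 2 := by
    have h := denom_pos c hc (-P) Q (by simpa using hP) hQ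
    rw [inner_neg_left, norm_neg] at h
    nlinarith [h]
  have hE2 : 0 < 1 - 2 * c * ⟪x, y⟫ + c ^ 2 * ‖x‖ ^ 2 * ‖y‖ ^ 2 := by
    have h := denom_pos c hc (-x) y (by simpa using hx) hy
    rw [inner_neg_left, norm_neg] at h
    nlinarith [h]
  have hPn : ‖P‖ ^ 2 = (‖u‖ ^ 2 + 2 * ⟪u, x⟫ + ‖x‖ ^ 2) /
      (1 + 2 * c * ⟪u, x⟫ + c ^ 2 * ‖u‖ ^ 2 * ‖x‖ ^ 2) := norm_mobiusAdd_sq c u x hDx.ne'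
  have hQn : ‖Q‖ ^ 2 = (‖u‖ ^ 2 + 2 * ⟪u, y⟫ + ‖y‖ ^ 2) /
      (1 + 2 * c * ⟪u, y⟫ + c ^ 2 * ‖u‖ ^ 2 * ‖y‖ ^ 2) := norm_mobiusAdd_sq c u y hDy.ne'
  have hPQ := inner_mobiusAdd c u x y hDx.ne' hDy.ne'
  have key : ‖mobiusAdd c (-P) Q‖ ^ 2 = ‖mobiusAdd c (-x) y‖ ^ 2 := by
    rw [norm_mobiusAdd_neg_sq c P Q hE1.ne', norm_mobiusAdd_neg_sq c x y hE2.ne',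
      div_eq_div_iff hE1.ne' hE2.ne', hPn, hQn, hPQ]
    have hx' := hDx.ne'
    have hy' := hDy.ne'
    generalize hA : 1 + 2 * c * ⟪u, x⟫ + c ^ 2 * ‖u‖ ^ 2 * ‖x‖ ^ 2 = A at hx' ⊢
    generalize hB : 1 + 2 * c * ⟪u, y⟫ + c ^ 2 * ‖u‖ ^ 2 * ‖y‖ ^ 2 = B at hy' ⊢
    field_simp
    subst hA hB
    ring
  have hnorm : ‖mobiusAdd c (-P) Q‖ = ‖mobiusAdd c (-x) y‖ := by
    have h := congrArg Real.sqrt key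
    rwa [Real.sqrt_sq (norm_nonneg _), Real.sqrt_sq (norm_nonneg _)] at h
  simp only [hypDist, hnorm]
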